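/- For ω > 0 and -2√ω < c ≤ 0 (in fact for all c with c² < 4ω), putting r = √(4ω - c²), the profile ϕ_{ω,c} satisfies the ODE -ϕ'' + (ω - c²/4)ϕ + (c/2)ϕ³ - (3/16)ϕ⁵ = 0, where ϕ(x) = ((√ω/r²)(cosh(rx) - c/(2√ω)))^{-1/2}. -/
import Mathlib

/-- The real soliton profile `ϕ_{ω,c}` of the derivative NLS. -/
noncomputable def varphi (ω c x : ℝ) : ℝ :=
  (Real.sqrt ω / (4 * ω - c ^ 2)
      * (Real.cosh (x * Real.sqrt (4 * ω - c ^ 2)) - c / (2 * Real.sqrt ω)))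
    ^ (-(1 / 2 : ℝ))

/-- the explicit profile `ϕ_{ω,c}` solves
`-ϕ'' + (ω - c²/4)ϕ + (c/2)ϕ³ - (3/16)ϕ⁵ = 0`. -/
theorem stmt15 (ω c : ℝ) (hω : 0 < ω)
    (hc1 : -2 * Real.sqrt ω < c) (hc2 : c < 2 * Real.sqrt ω) :
    ∀ x : ℝ,
      -(deriv (deriv (varphi ω c)) x) + (ω - c ^ 2 / 4) * varphi ω c x
        + (c / 2) * (varphi ω c x) ^ 3 - (3 / 16) * (varphi ω c x) ^ 5 = 0 := by
  intro x
  have hs0 : 0 < Real.sqrt ω := Real.sqrt_pos.2 hω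
  set s := Real.sqrt ω with hsdef
  have hs2 : s ^ 2 = ω := Real.sq_sqrt hω.le
  have hD : 0 < 4 * ω - c ^ 2 := by nlinarith
  set r := Real.sqrt (4 * ω - c ^ 2) with hrdef
  have hr0 : 0 < r := Real.sqrt_pos.2 hD
  have hr2 : r ^ 2 = 4 * ω - c ^ 2 := Real.sq_sqrt hD.le
  -- the inner function
  set g : ℝ → ℝ := fun z => s / (4 * ω - c ^ 2) * (Real.cosh (z * r) - c / (2 * s))
    with hgdef
  have hgpos : ∀ y : ℝ, 0 < g y := by
    intro y
    have h1 : c / (2 * s) < 1 := (div_lt_one (by linarith)).2 hc2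
    have h2 : (1:ℝ) ≤ Real.cosh (y * r) := Real.one_le_cosh _
    have : 0 < Real.cosh (y * r) - c / (2 * s) := by linarith
    exact mul_pos (div_pos hs0 hD) this
  have hvarphi : varphi ω c = fun z => g z ^ (-(1/2 : ℝ)) := by
    funext z
    simp only [varphi, hgdef, ← hsdef, ← hrdef]
  have hg' : ∀ y : ℝ, HasDerivAt g (s / (4 * ω - c ^ 2) * (Real.sinh (y * r) * r)) y := by
    intro y
    simpa using (((hasDerivAt_id y).mul_const r).cosh.sub_const (c / (2*s))).const_mul (s / (4 * ω - c ^ 2))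
  have hphi' : ∀ y : ℝ, HasDerivAt (varphi ω c)
      (s / (4 * ω - c ^ 2) * (Real.sinh (y * r) * r) * (-(1/2 : ℝ)) * g y ^ (-(3/2) : ℝ)) y := by
    intro y
    rw [hvarphi]
    have h := (hg' y).rpow_const (p := -(1/2 : ℝ)) (Or.inl (hgpos y).ne')
    have e : (-(1/2 : ℝ)) - 1 = -(3/2 : ℝ) := by norm_num
    rw [e] at h
    exact h
  have hderiv1 : deriv (varphi ω c) = fun y =>
      s / (4 * ω - c ^ 2) * (Real.sinh (y * r) * r) * (-(1/2 : ℝ)) * g y ^ (-(3/2) : ℝ) :=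
    funext fun y => (hphi' y).deriv
  -- second derivative
  have hsinh' : HasDerivAt (fun y => s / (4 * ω - c ^ 2) * (Real.sinh (y * r) * r) * (-(1/2 : ℝ)))
      (s / (4 * ω - c ^ 2) * (Real.cosh (x * r) * r * r) * (-(1/2 : ℝ))) x := by
    simpa using ((((hasDerivAt_id x).mul_const r).sinh.mul_const r).const_mul (s / (4 * ω - c ^ 2))).mul_const (-(1/2 : ℝ))
  have hgp' : HasDerivAt (fun y => g y ^ (-(3/2) : ℝ))
      (s / (4 * ω - c ^ 2) * (Real.sinh (x * r) * r) * (-(3/2 : ℝ)) * g x ^ (-(5/2) : ℝ)) x := by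
    have h := (hg' x).rpow_const (p := -(3/2 : ℝ)) (Or.inl (hgpos x).ne')
    have e : (-(3/2 : ℝ)) - 1 = -(5/2 : ℝ) := by norm_num
    rw [e] at h
    exact h
  have hphi'' : HasDerivAt (deriv (varphi ω c))
      ( s / (4 * ω - c ^ 2) * (Real.cosh (x * r) * r * r) * (-(1/2 : ℝ)) * g x ^ (-(3/2) : ℝ)
        + s / (4 * ω - c ^ 2) * (Real.sinh (x * r) * r) * (-(1/2 : ℝ))
          * (s / (4 * ω - c ^ 2) * (Real.sinh (x * r) * r) * (-(3/2 : ℝ)) * g x ^ (-(5/2) : ℝ)) ) x := by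
    rw [hderiv1]
    exact hsinh'.mul hgp'
  have hdd := hphi''.deriv
  rw [hdd, hvarphi]
  simp only []
  have hGpos := hgpos x
  have e3 : (g x ^ (-(1/2):ℝ)) ^ (3:ℕ) = g x * g x ^ (-(5/2):ℝ) := by
    rw [← Real.rpow_natCast (g x ^ (-(1/2):ℝ)) 3, ← Real.rpow_mul hGpos.le,
        show ((-(1/2):ℝ) * ((3:ℕ):ℝ)) = 1 + -(5/2) by push_cast; ring,
        Real.rpow_add hGpos, Real.rpow_one]
  have e5 : (g x ^ (-(1/2):ℝ)) ^ (5:ℕ) = g x ^ (-(5/2):ℝ) := by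
    rw [← Real.rpow_natCast (g x ^ (-(1/2):ℝ)) 5, ← Real.rpow_mul hGpos.le]
    norm_num
  have e1 : g x ^ (-(1/2):ℝ) = g x * (g x * g x ^ (-(5/2):ℝ)) := by
    rw [show (-(1/2):ℝ) = 1 + (1 + -(5/2)) by norm_num, Real.rpow_add hGpos,
        Real.rpow_add hGpos, Real.rpow_one]
  have e2 : g x ^ (-(3/2):ℝ) = g x * g x ^ (-(5/2):ℝ) := by
    rw [show (-(3/2):ℝ) = 1 + -(5/2) by norm_num, Real.rpow_add hGpos, Real.rpow_one]
  rw [e3, e5, e1, e2]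
  simp only [hgdef]
  have hC : Real.cosh (x * r) ^ 2 - Real.sinh (x * r) ^ 2 = 1 := Real.cosh_sq_sub_sinh_sq _
  have hu : (4 * ω - c ^ 2) * (4 * ω - c ^ 2)⁻¹ = 1 := mul_inv_cancel₀ hD.ne'
  have hv : 2 * s * (2 * s)⁻¹ = 1 := mul_inv_cancel₀ (by positivity)
  set C := Real.cosh (x * r) with hCdef
  set S := Real.sinh (x * r) with hSdef
  set X := (s / (4 * ω - c ^ 2) * (C - c / (2 * s))) ^ (-(5/2):ℝ) with hXdef
  linear_combination
    (3/4) * s^2 * ((4*ω-c^2)⁻¹)^2 * (4*ω-c^2) * X * hC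
    + (3/4) * (4*ω-c^2)⁻¹ * X * hs2
    + X * (-(3/4)*s^2*((4*ω-c^2)⁻¹)^2*S^2
        + (1/2)*s^2*((4*ω-c^2)⁻¹)^2*C*(C - c*(2*s)⁻¹)) * hr2
    + X * (s^2*(4*ω-c^2)⁻¹*(3/4 - c*(2*s)⁻¹*C + (1/4)*c^2*((2*s)⁻¹)^2) + 3/16) * hu
    + X * (-(1/2)*c*s*(4*ω-c^2)⁻¹*C + (1/8)*c^2*(4*ω-c^2)⁻¹*s*(2*s)⁻¹
        - (3/16)*c^2*(4*ω-c^2)⁻¹) * hv
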